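/- Let m be a positive integer, α ∈ (0,1], and let ν be a probability measure on {1,...,m}. Define the shape function β(r) = ∑_{i=1}^r i·ν({i}) for r ∈ {1,...,m}. Let p be a superuniform random variable in [0,1] (ℙ(p ≤ t) ≤ t for all t ∈ [0,1]) and let R be any random variable taking values in {1,...,m} on the same probability space (with arbitrary joint dependence between p and R). Then E[ 1{p ≤ αβ(R)/m} / R ] ≤ α/m. -/

import Mathlib

open MeasureTheory ProbabilityTheory Classical

lemma abel_aux (F t : ℕ → ℝ) (hF0 : F 0 = 0) (ht0 : t 0 = 0) :
    ∀ n, (∀ r, r ≤ n → F r ≤ t r) →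
      (∑ r ∈ Finset.Icc 1 n, (1 / (r:ℝ)) * (F r - F (r-1))) + (1/(n:ℝ)) * (t n - F n)
        ≤ ∑ r ∈ Finset.Icc 1 n, (1 / (r:ℝ)) * (t r - t (r-1)) := by
  intro n
  induction n with
  | zero => intro _; simp [hF0, ht0]
  | succ n ih =>
    intro h
    have ihn := ih (fun r hr => h r (le_trans hr (Nat.le_succ n)))
    rw [Finset.sum_Icc_succ_top (by omega), Finset.sum_Icc_succ_top (by omega)]
    have hs : Nat.succ n - 1 = n := by omega
    have key : (1/((n+1:ℕ):ℝ)) * (t n - F n) ≤ (1/(n:ℝ)) * (t n - F n) := by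
      rcases Nat.eq_zero_or_pos n with h0 | h0
      · subst h0; simp [hF0, ht0]
      · apply mul_le_mul_of_nonneg_right
        · apply one_div_le_one_div_of_le
          · exact_mod_cast h0
          · push_cast; linarith
        · linarith [h n (Nat.le_succ n)]
    push_cast [hs] at *
    linarith


/-- the shape-function bound under arbitrary dependence: let `ν` be a
probability measure on `{1,…,m}` with shape function `β(r) = ∑_{i=1}^r i·ν({i})`. If `p` is
superuniform on `[0,1]` and `R` is any `{1,…,m}`-valued random variable on the same space
(arbitrary joint dependence), then `E[1{p ≤ αβ(R)/m} / R] ≤ α/m`. -/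
theorem shape_function_bound
    {Ω : Type*} [MeasurableSpace Ω] (P : Measure Ω) [IsProbabilityMeasure P]
    {m : ℕ} (hm : 0 < m) (α : ℝ) (hα : α ∈ Set.Ioc (0 : ℝ) 1)
    (ν : ℕ → ℝ) (hν0 : ∀ i, 0 ≤ ν i) (hν1 : ∑ i ∈ Finset.Icc 1 m, ν i = 1)
    (p : Ω → ℝ) (hp : Measurable p) (hpval : ∀ ω, p ω ∈ Set.Icc (0 : ℝ) 1)
    (hsuper : ∀ t ∈ Set.Icc (0 : ℝ) 1, P {ω | p ω ≤ t} ≤ ENNReal.ofReal t)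
    (R : Ω → ℕ) (hR : Measurable R) (hRval : ∀ ω, R ω ∈ Set.Icc 1 m) :
    ∫ ω, (if p ω ≤ α * (∑ i ∈ Finset.Icc 1 (R ω), (i : ℝ) * ν i) / m
          then (1 : ℝ) / (R ω : ℝ) else 0) ∂P ≤ α / m := by
  obtain ⟨hα0, hα1⟩ := hα
  have hm' : (0:ℝ) < m := by exact_mod_cast hm
  set t : ℕ → ℝ := fun r => α * (∑ i ∈ Finset.Icc 1 r, (i : ℝ) * ν i) / m with ht_def
  have ht0 : t 0 = 0 := by simp [ht_def]
  have htnn : ∀ r, 0 ≤ t r := by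
    intro r
    apply div_nonneg _ (le_of_lt hm')
    apply mul_nonneg (le_of_lt hα0)
    exact Finset.sum_nonneg fun i _ => mul_nonneg (Nat.cast_nonneg i) (hν0 i)
  have htmono : Monotone t := by
    intro a b hab
    simp only [ht_def]
    have hα0' : (0:ℝ) ≤ α := le_of_lt hα0
    have hsum : (∑ i ∈ Finset.Icc 1 a, (i:ℝ) * ν i) ≤ ∑ i ∈ Finset.Icc 1 b, (i:ℝ) * ν i := by
      apply Finset.sum_le_sum_of_subset_of_nonneg (Finset.Icc_subset_Icc_right hab)
      intro i _ _; exact mul_nonneg (Nat.cast_nonneg i) (hν0 i)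
    gcongr
  have htub : ∀ r, r ≤ m → t r ≤ 1 := by
    intro r hr
    have hβ : (∑ i ∈ Finset.Icc 1 r, (i : ℝ) * ν i) ≤ m := by
      calc (∑ i ∈ Finset.Icc 1 r, (i : ℝ) * ν i)
          ≤ ∑ i ∈ Finset.Icc 1 r, (m : ℝ) * ν i := by
            apply Finset.sum_le_sum
            intro i hi
            have : i ≤ m := le_trans (Finset.mem_Icc.mp hi).2 hr
            exact mul_le_mul_of_nonneg_right (by exact_mod_cast this) (hν0 i)
        _ ≤ ∑ i ∈ Finset.Icc 1 m, (m : ℝ) * ν i := by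
            apply Finset.sum_le_sum_of_subset_of_nonneg
            · exact Finset.Icc_subset_Icc_right hr
            · intro i _ _; exact mul_nonneg (Nat.cast_nonneg m) (hν0 i)
        _ = m := by rw [← Finset.mul_sum, hν1, mul_one]
    have h1 : t r ≤ α * m / m := by
      simp only [ht_def]
      have hα0' : (0:ℝ) ≤ α := le_of_lt hα0
      gcongr
    calc t r ≤ α * m / m := h1
      _ = α := by field_simp
      _ ≤ 1 := hα1
  have ht01 : ∀ r, r ≤ m → t r ∈ Set.Icc (0:ℝ) 1 := fun r hr => ⟨htnn r, htub r hr⟩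
  have htdiff : ∀ r, 1 ≤ r → t r - t (r-1) = α * ((r:ℝ) * ν r) / m := by
    intro r hr
    have hrw : r = (r-1) + 1 := by omega
    rw [hrw]
    simp only [ht_def, Nat.add_sub_cancel]
    rw [Finset.sum_Icc_succ_top (by omega : 1 ≤ (r-1)+1)]
    push_cast
    ring
  -- the null set
  have hp0 : P {ω | p ω ≤ 0} = 0 := by
    have := hsuper 0 ⟨le_refl 0, zero_le_one⟩
    simpa using this
  have hae : ∀ᵐ ω ∂P, 0 < p ω := by
    rw [ae_iff]
    convert hp0 using 2
    ext ω; simp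
  -- F and the measurable sets
  set S : ℕ → Set Ω := fun r => {ω | p ω ≤ t r} with hS_def
  have hSmeas : ∀ r, MeasurableSet (S r) := fun r => measurableSet_le hp measurable_const
  set F : ℕ → ℝ := fun r => (P (S r)).toReal with hF_def
  have hF0 : F 0 = 0 := by simp [hF_def, hS_def, ht0, hp0]
  have hFle : ∀ r, r ≤ m → F r ≤ t r := by
    intro r hr
    have h1 := hsuper (t r) (ht01 r hr)
    have := ENNReal.toReal_mono ENNReal.ofReal_ne_top h1
    rwa [ENNReal.toReal_ofReal (htnn r)] at this
  -- the step function g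
  set g : Ω → ℝ := fun ω => ∑ r ∈ Finset.Icc 1 m,
      (if t (r-1) < p ω ∧ p ω ≤ t r then (1:ℝ)/(r:ℝ) else 0) with hg_def
  set f : Ω → ℝ := fun ω => (if p ω ≤ t (R ω) then (1 : ℝ) / (R ω : ℝ) else 0) with hf_def
  -- measurability / integrability
  have hfmeas : Measurable f := by
    apply Measurable.ite
    · exact measurableSet_le hp ((measurable_from_top (f := t)).comp hR)
    · exact (measurable_from_top (f := fun n : ℕ => (1:ℝ)/(n:ℝ))).comp hR
    · exact measurable_const
  have hfint : Integrable f P := by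
    apply Integrable.mono' (integrable_const (1:ℝ)) hfmeas.aestronglyMeasurable
    filter_upwards with ω
    rw [Real.norm_eq_abs]
    simp only [hf_def]
    split
    · rw [abs_of_nonneg (by positivity)]
      have h1 : 1 ≤ R ω := (hRval ω).1
      have h2 : (1:ℝ) ≤ R ω := by exact_mod_cast h1
      rw [div_le_one (by linarith)]; exact h2
    · simp
  have htermint : ∀ r, 1 ≤ r → Integrable
      (fun ω => if t (r-1) < p ω ∧ p ω ≤ t r then (1:ℝ)/(r:ℝ) else 0) P := by
    intro r hr1
    apply Integrable.mono' (integrable_const (1:ℝ))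
    · apply Measurable.aestronglyMeasurable
      apply Measurable.ite _ measurable_const measurable_const
      exact (measurableSet_lt measurable_const hp).inter (measurableSet_le hp measurable_const)
    · filter_upwards with ω
      rw [Real.norm_eq_abs]
      split
      · rw [abs_of_nonneg (by positivity)]
        have h2 : (1:ℝ) ≤ r := by exact_mod_cast hr1
        rw [div_le_one (by linarith)]; exact h2
      · simp
  have hgint : Integrable g P := by
    apply integrable_finset_sum
    intro r hr
    exact htermint r (Finset.mem_Icc.mp hr).1
  -- pointwise bound a.e.
  have hptw : ∀ᵐ ω ∂P, f ω ≤ g ω := by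
    filter_upwards [hae] with ω hω
    by_cases hc : p ω ≤ t (R ω)
    · set s := (Finset.Icc 1 m).filter (fun j => p ω ≤ t j) with hs_def
      have hRs : R ω ∈ s := by
        rw [hs_def, Finset.mem_filter]
        exact ⟨Finset.mem_Icc.mpr ⟨(hRval ω).1, (hRval ω).2⟩, hc⟩
      have hsne : s.Nonempty := ⟨R ω, hRs⟩
      set r := s.min' hsne with hr_def
      have hrs : r ∈ s := Finset.min'_mem s hsne
      obtain ⟨hrIcc, hrp⟩ := Finset.mem_filter.mp hrs
      have hr1 : 1 ≤ r := (Finset.mem_Icc.mp hrIcc).1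
      have hrm : r ≤ m := (Finset.mem_Icc.mp hrIcc).2
      have hrR : r ≤ R ω := Finset.min'_le s _ hRs
      have hnot : ¬ p ω ≤ t (r-1) := by
        rcases Nat.eq_or_lt_of_le hr1 with h1 | h1
        · rw [← h1]; simp only [Nat.sub_self, ht0]  -- wrong, fix below
          linarith
        · intro hcon
          have hmem : r - 1 ∈ s := by
            rw [hs_def, Finset.mem_filter]
            exact ⟨Finset.mem_Icc.mpr ⟨by omega, by omega⟩, hcon⟩
          have := Finset.min'_le s _ hmem
          omega
      calc f ω = 1/(R ω : ℝ) := by simp only [hf_def]; exact if_pos hc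
        _ ≤ 1/(r:ℝ) := by
            apply one_div_le_one_div_of_le
            · exact_mod_cast hr1
            · exact_mod_cast hrR
        _ = (if t (r-1) < p ω ∧ p ω ≤ t r then (1:ℝ)/(r:ℝ) else 0) :=
            (if_pos ⟨not_le.mp hnot, hrp⟩).symm
        _ ≤ g ω := by
            simp only [hg_def]
            apply Finset.single_le_sum
              (f := fun i => if t (i-1) < p ω ∧ p ω ≤ t i then (1:ℝ)/(i:ℝ) else 0) _ hrIcc
            intro i _
            split
            · positivity
            · exact le_refl 0
    · simp only [hf_def, if_neg hc, hg_def]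
      apply Finset.sum_nonneg
      intro i _
      split
      · positivity
      · exact le_refl 0
  -- integral of g
  have hgcalc : ∫ ω, g ω ∂P = ∑ r ∈ Finset.Icc 1 m, (1/(r:ℝ)) * (F r - F (r-1)) := by
    simp only [hg_def]
    rw [integral_finset_sum _ (fun r hr => htermint r (Finset.mem_Icc.mp hr).1)]
    apply Finset.sum_congr rfl
    intro r hr
    have hr1 : 1 ≤ r := (Finset.mem_Icc.mp hr).1
    have hA : {ω | t (r-1) < p ω ∧ p ω ≤ t r} = S r \ S (r-1) := by
      ext ω
      simp only [hS_def, Set.mem_diff, Set.mem_setOf_eq, not_le]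
      tauto
    have hAmeas : MeasurableSet {ω | t (r-1) < p ω ∧ p ω ≤ t r} := by
      exact (measurableSet_lt measurable_const hp).inter (measurableSet_le hp measurable_const)
    have hifeq : (fun ω => if t (r-1) < p ω ∧ p ω ≤ t r then (1:ℝ)/(r:ℝ) else 0)
        = Set.indicator {ω | t (r-1) < p ω ∧ p ω ≤ t r} (fun _ => (1:ℝ)/(r:ℝ)) := by
      ext ω
      rw [Set.indicator_apply]
      rfl
    rw [hifeq, integral_indicator_const _ hAmeas, hA]
    have hsub : S (r-1) ⊆ S r := fun ω hω => le_trans hω (htmono (Nat.sub_le r 1))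
    rw [measureReal_def, measure_diff hsub (hSmeas (r-1)).nullMeasurableSet (measure_ne_top P _)]
    rw [ENNReal.toReal_sub_of_le (measure_mono hsub) (measure_ne_top P _)]
    simp only [hF_def, smul_eq_mul]
    ring
  have hmain : ∫ ω, f ω ∂P ≤ α / m := by
    calc ∫ ω, f ω ∂P ≤ ∫ ω, g ω ∂P := integral_mono_ae hfint hgint hptw
      _ = ∑ r ∈ Finset.Icc 1 m, (1/(r:ℝ)) * (F r - F (r-1)) := hgcalc
      _ ≤ ∑ r ∈ Finset.Icc 1 m, (1/(r:ℝ)) * (t r - t (r-1)) := by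
          have habel := abel_aux F t hF0 ht0 m hFle
          have hlast : 0 ≤ (1/(m:ℝ)) * (t m - F m) := by
            apply mul_nonneg (by positivity)
            linarith [hFle m le_rfl]
          linarith
      _ = α / m := by
          rw [Finset.sum_congr rfl (fun r hr => by
            rw [htdiff r (Finset.mem_Icc.mp hr).1])]
          have : ∀ r ∈ Finset.Icc 1 m, (1/(r:ℝ)) * (α * ((r:ℝ) * ν r) / m)
              = (α / m) * ν r := by
            intro r hr
            have hr1 : 1 ≤ r := (Finset.mem_Icc.mp hr).1
            have hrne : (r:ℝ) ≠ 0 := by positivity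
            field_simp
          rw [Finset.sum_congr rfl this, ← Finset.mul_sum, hν1, mul_one]
  exact hmain
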